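/- The maximal nilpotent subsemigroups of B(n) are exactly the subsemigroups of the form {(i,j) : i < j in L} ∪ {0} for a strict linear order L on {1,...,n}; in particular there are exactly n! maximal nilpotent subsemigroups of B(n). -/

import Mathlib

/-- The aperiodic Brandt semigroup `B(n)` on `({1..n} × {1..n}) ∪ {0}`,
with `none` playing the role of the zero element. -/
abbrev B (n : ℕ) := Option (Fin n × Fin n)

/-- Multiplication in `B(n)`: `(i,j)(k,l) = (i,l)` if `j = k`, and `0` otherwise. -/
def bmul {n : ℕ} : B n → B n → B n
  | some (i, j), some (k, l) => if j = k then some (i, l) else none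
  | _, _ => none

/-- A subset of `B(n)` is a subsemigroup if it is closed under multiplication. -/
def IsSub {n : ℕ} (T : Set (B n)) : Prop :=
  ∀ x ∈ T, ∀ y ∈ T, bmul x y ∈ T

/-- The subsemigroup of `B(n)` generated by a subset. -/
def gen {n : ℕ} (X : Set (B n)) : Set (B n) :=
  ⋂₀ {T | IsSub T ∧ X ⊆ T}

/-- `X` is a face of the subsemigroup complex `H(B(n))`: it admits an enumeration
producing a strictly increasing chain of generated subsemigroups. -/
def IsFace {n : ℕ} (X : Set (B n)) : Prop :=
  ∃ l : List (B n), l.Nodup ∧ {x | x ∈ l} = X ∧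
    ∀ (i : ℕ) (h : i < l.length), l.get ⟨i, h⟩ ∉ gen {x | x ∈ l.take i}

/-- A facet is a maximal face. -/
def IsFacet {n : ℕ} (X : Set (B n)) : Prop :=
  IsFace X ∧ ∀ Y : Set (B n), IsFace Y → X ⊆ Y → X = Y

/-- Product `x * y₁ * ⋯ * y_k` in `B(n)`. -/
def bprod {n : ℕ} : B n → List (B n) → B n
  | x, [] => x
  | x, y :: l => bprod (bmul x y) l

/-- Closure under the inverse operation `(i,j) ↦ (j,i)`. -/
def InvClosed {n : ℕ} (T : Set (B n)) : Prop :=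
  ∀ i j : Fin n, some (i, j) ∈ T → some (j, i) ∈ T

/-- A nilpotent subsemigroup of `B(n)` containing `0`: some power is `{0}`. -/
def IsNilpSub {n : ℕ} (T : Set (B n)) : Prop :=
  IsSub T ∧ none ∈ T ∧ ∃ k : ℕ, 1 ≤ k ∧
    ∀ (x : B n) (l : List (B n)), x ∈ T → (∀ y ∈ l, y ∈ T) →
      l.length + 1 = k → bprod x l = none

namespace S6
variable {n : ℕ}

lemma bmul_none_left (y : B n) : bmul none y = none := by
  rcases y with _ | ⟨i, j⟩ <;> rfl

lemma bmul_none_right (x : B n) : bmul x none = none := by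
  rcases x with _ | ⟨i, j⟩ <;> rfl

lemma bmul_some (i j k l : Fin n) :
    bmul (some (i, j)) (some (k, l)) = if j = k then some (i, l) else none := rfl

lemma bprod_cons (x y : B n) (l : List (B n)) :
    bprod x (y :: l) = bprod (bmul x y) l := rfl

lemma bprod_none (l : List (B n)) : bprod (none : B n) l = none := by
  induction l with
  | nil => rfl
  | cons y l ih => rw [bprod_cons, bmul_none_left, ih]

lemma bprod_idem (i : Fin n) (m : ℕ) :
    bprod (some (i, i)) (List.replicate m (some (i, i))) = some (i, i) := by
  induction m with
  | zero => rfl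
  | succ m ih =>
    rw [List.replicate_succ, bprod_cons, bmul_some]
    simpa using ih

/-- rank function lemma -/
lemma rank_lt {r : Fin n → Fin n → Prop}
    (htr : ∀ {i j k}, r i j → r j k → r i k) (hirr : ∀ i, ¬ r i i)
    {i j : Fin n} (h : r i j) :
    {c | r c i}.ncard < {c | r c j}.ncard := by
  apply Set.ncard_lt_ncard _ (Set.toFinite _)
  refine ⟨fun c hc => htr hc h, fun h' => hirr i (h' h)⟩

lemma rank_lt_n {r : Fin n → Fin n → Prop} (hirr : ∀ i, ¬ r i i) (j : Fin n) :
    {c | r c j}.ncard < n := by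
  have : {c | r c j}.ncard < (Set.univ : Set (Fin n)).ncard := by
    apply Set.ncard_lt_ncard _ (Set.toFinite _)
    exact ⟨Set.subset_univ _, fun h' => hirr j (h' (Set.mem_univ j))⟩
  simpa [Set.ncard_univ] using this

lemma chain_le (T : Set (B n)) (f : Fin n → ℕ)
    (hf : ∀ i j : Fin n, some (i, j) ∈ T → f i < f j) :
    ∀ (l : List (B n)), (∀ y ∈ l, y ∈ T) → ∀ a c a' b : Fin n,
      bprod (some (a, c)) l = some (a', b) → f c + l.length ≤ f b := by
  intro l
  induction l with
  | nil =>
    intro _ a c a' b h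
    simp only [bprod] at h
    obtain ⟨rfl, rfl⟩ : a = a' ∧ c = b := by simpa using h
    simp
  | cons y l ih =>
    intro hmem a c a' b h
    rw [bprod_cons] at h
    rcases y with _ | ⟨p, q⟩
    · rw [bmul_none_right, bprod_none] at h; exact absurd h (by simp)
    · rw [bmul_some] at h
      by_cases hc : c = p
      · subst hc
        rw [if_pos rfl] at h
        have h1 : f c < f q := hf _ _ (hmem _ List.mem_cons_self)
        have h2 := ih (fun y hy => hmem y (List.mem_cons_of_mem _ hy)) a q a' b h
        simp only [List.length_cons]
        omega
      · rw [if_neg hc, bprod_none] at h; exact absurd h (by simp)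

end S6

namespace S6
variable {n : ℕ}

lemma isNilp_iff (T : Set (B n)) :
    IsNilpSub T ↔ IsSub T ∧ none ∈ T ∧ ∀ i : Fin n, some (i, i) ∉ T := by
  constructor
  · rintro ⟨hsub, h0, k, hk, hnil⟩
    refine ⟨hsub, h0, fun i hi => ?_⟩
    have h := hnil (some (i, i)) (List.replicate (k - 1) (some (i, i))) hi
      (fun y hy => by rw [List.eq_of_mem_replicate hy]; exact hi)
      (by simp; omega)
    rw [bprod_idem] at h
    simp at h
  · rintro ⟨hsub, h0, hirr⟩
    have htr : ∀ {i j k : Fin n}, some (i, j) ∈ T → some (j, k) ∈ T → some (i, k) ∈ T := by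
      intro i j k hij hjk
      have := hsub _ hij _ hjk
      rwa [bmul_some, if_pos rfl] at this
    have hirr' : ∀ i : Fin n, ¬ (fun i j : Fin n => some (i, j) ∈ T) i i := hirr
    set rk : Fin n → ℕ := fun i => {c | some (c, i) ∈ T}.ncard with hrk
    have hf : ∀ i j : Fin n, some (i, j) ∈ T → rk i < rk j :=
      fun i j h => rank_lt (r := fun a b => some (a, b) ∈ T) htr hirr h
    refine ⟨hsub, h0, n + 1, by omega, ?_⟩
    intro x l hx hl hlen
    cases hres : bprod x l with
    | none => rfl
    | some p =>
      exfalso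
      obtain ⟨a', b⟩ := p
      rcases x with _ | ⟨a, c⟩
      · rw [bprod_none] at hres; simp at hres
      · have h1 := chain_le T rk hf l hl a c a' b hres
        have h2 : rk b < n := rank_lt_n (r := fun a b => some (a, b) ∈ T) hirr b
        have h3 : rk a < rk c := hf a c hx
        omega

end S6

namespace S6
variable {n : ℕ}

/-- Every strict partial order on `Fin n` extends to a strict total order. -/
lemma exists_sto_ext (r : Fin n → Fin n → Prop)
    (htr : ∀ {i j k}, r i j → r j k → r i k) (hirr : ∀ i, ¬ r i i) :
    ∃ s : Fin n → Fin n → Prop, IsStrictTotalOrder (Fin n) s ∧ ∀ i j, r i j → s i j := by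
  let r' : Fin n → Fin n → Prop := fun a b => r a b ∨ a = b
  haveI : IsPartialOrder (Fin n) r' :=
    { refl := fun a => Or.inr rfl
      trans := by
        rintro a b c (hab | rfl) (hbc | rfl)
        · exact Or.inl (htr hab hbc)
        · exact Or.inl hab
        · exact Or.inl hbc
        · exact Or.inr rfl
      antisymm := by
        rintro a b hab hba
        rcases hab with hab | rfl
        · rcases hba with hba | h
          · exact absurd (htr hab hba) (hirr a)
          · exact h.symm
        · rfl }
  obtain ⟨s, hs, hrs⟩ := extend_partialOrder r'
  haveI := hs
  refine ⟨fun a b => s a b ∧ a ≠ b, ?_, ?_⟩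
  · refine { trichotomous := ?_, irrefl := fun a h => h.2 rfl, trans := ?_ }
    · intro a b
      rcases eq_or_ne a b with rfl | hne
      · exact fun _ _ => rfl
      · rcases Std.Total.total (r := s) a b with h | h
        · exact fun h1 _ => absurd ⟨h, hne⟩ h1
        · exact fun _ h2 => absurd ⟨h, hne.symm⟩ h2
    · intro a b c hab hbc
      refine ⟨IsTrans.trans (r := s) a b c hab.1 hbc.1, ?_⟩
      rintro rfl
      exact hab.2 (Std.Antisymm.antisymm (r := s) _ _ hab.1 hbc.1)
  · intro i j h
    refine ⟨hrs i j (Or.inl h), ?_⟩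
    rintro rfl
    exact hirr i h

/-- the graph set of a relation -/
def gr (r : Fin n → Fin n → Prop) : Set (B n) :=
  {none} ∪ {x | ∃ i j : Fin n, r i j ∧ x = some (i, j)}

lemma mem_gr (r : Fin n → Fin n → Prop) (i j : Fin n) :
    some (i, j) ∈ gr r ↔ r i j := by
  simp only [gr, Set.mem_union, Set.mem_singleton_iff, Set.mem_setOf_eq]
  constructor
  · rintro (h | ⟨i', j', h, he⟩)
    · simp at h
    · obtain ⟨rfl, rfl⟩ : i = i' ∧ j = j' := by simpa using he
      exact h
  · intro h; exact Or.inr ⟨i, j, h, rfl⟩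

lemma none_mem_gr (r : Fin n → Fin n → Prop) : (none : B n) ∈ gr r :=
  Or.inl rfl

lemma gr_isSub (r : Fin n → Fin n → Prop)
    (htr : ∀ {i j k}, r i j → r j k → r i k) : IsSub (gr r) := by
  intro x hx y hy
  rcases x with _ | ⟨i, j⟩
  · rw [bmul_none_left]; exact none_mem_gr r
  rcases y with _ | ⟨k, l⟩
  · rw [bmul_none_right]; exact none_mem_gr r
  rw [bmul_some]
  by_cases h : j = k
  · subst h
    rw [if_pos rfl, mem_gr]
    exact htr ((mem_gr r i j).mp hx) ((mem_gr r j l).mp hy)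
  · rw [if_neg h]; exact none_mem_gr r

lemma gr_isNilp (r : Fin n → Fin n → Prop)
    (htr : ∀ {i j k}, r i j → r j k → r i k) (hirr : ∀ i, ¬ r i i) :
    IsNilpSub (gr r) := by
  rw [isNilp_iff]
  exact ⟨gr_isSub r htr, none_mem_gr r, fun i hi => hirr i ((mem_gr r i i).mp hi)⟩

lemma main_iff (T : Set (B n)) :
    (IsNilpSub T ∧ ∀ U : Set (B n), IsNilpSub U → T ⊆ U → U = T) ↔
      (∃ r : Fin n → Fin n → Prop, IsStrictTotalOrder (Fin n) r ∧
        T = {none} ∪ {x | ∃ i j : Fin n, r i j ∧ x = some (i, j)}) := by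
  constructor
  · rintro ⟨hN, hmax⟩
    obtain ⟨hsub, h0, hirr⟩ := (isNilp_iff T).mp hN
    have htr : ∀ {i j k : Fin n}, some (i, j) ∈ T → some (j, k) ∈ T → some (i, k) ∈ T := by
      intro i j k hij hjk
      have := hsub _ hij _ hjk
      rwa [bmul_some, if_pos rfl] at this
    obtain ⟨s, hs, hrs⟩ := exists_sto_ext (fun i j => some (i, j) ∈ T) htr hirr
    haveI := hs
    have hTsub : T ⊆ gr s := by
      intro x hx
      rcases x with _ | ⟨i, j⟩
      · exact none_mem_gr s
      · exact (mem_gr s i j).mpr (hrs i j hx)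
    have heq : gr s = T :=
      hmax (gr s) (gr_isNilp s (fun h1 h2 => _root_.trans_of s h1 h2)
        (fun i => irrefl_of s i)) hTsub
    exact ⟨s, hs, heq.symm⟩
  · rintro ⟨r, hr, rfl⟩
    haveI := hr
    have htr : ∀ {i j k : Fin n}, r i j → r j k → r i k := fun h1 h2 => _root_.trans_of r h1 h2
    have hirr : ∀ i, ¬ r i i := fun i => irrefl_of r i
    refine ⟨gr_isNilp r htr hirr, ?_⟩
    intro U hU hsub
    obtain ⟨hUsub, hU0, hUirr⟩ := (isNilp_iff U).mp hU
    ext x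
    rcases x with _ | ⟨i, j⟩
    · constructor
      · intro _; exact none_mem_gr r
      · intro _; exact hU0
    · show some (i, j) ∈ U ↔ some (i, j) ∈ gr r
      rw [mem_gr]
      constructor
      · intro hij
        by_contra hnr
        rcases trichotomous_of r i j with h | rfl | h
        · exact hnr h
        · exact hUirr i hij
        · have hji : some (j, i) ∈ U := hsub ((mem_gr r j i).mpr h)
          have := hUsub _ hij _ hji
          rw [bmul_some, if_pos rfl] at this
          exact hUirr i this
      · intro h; exact hsub ((mem_gr r i j).mpr h)

end S6

namespace S6
variable {n : ℕ}

lemma permRel_sto (σ : Equiv.Perm (Fin n)) :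
    IsStrictTotalOrder (Fin n) (fun i j => σ i < σ j) := by
  refine { trichotomous := ?_, irrefl := fun a => lt_irrefl _,
           trans := fun a b c => lt_trans }
  intro a b
  rcases lt_trichotomy (σ a) (σ b) with h | h | h
  · exact fun h1 _ => absurd h h1
  · exact fun _ _ => σ.injective h
  · exact fun _ h2 => absurd h h2

lemma sto_card :
    Nat.card {r : Fin n → Fin n → Prop // IsStrictTotalOrder (Fin n) r} = n.factorial := by
  have hbij : Function.Bijective (fun σ : Equiv.Perm (Fin n) =>
      (⟨fun i j => σ i < σ j, permRel_sto σ⟩ :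
        {r : Fin n → Fin n → Prop // IsStrictTotalOrder (Fin n) r})) := by
    constructor
    · intro σ τ h
      have h' : ∀ i j : Fin n, (σ i < σ j ↔ τ i < τ j) := fun i j =>
        iff_of_eq (congrFun (congrFun (congrArg Subtype.val h) i) j)
      have hm : StrictMono (fun x => σ (τ.symm x)) := by
        intro x y hxy
        exact (h' _ _).mpr (by simpa using hxy)
      have w : WellFoundedLT (Fin n) := inferInstance
      have hrange : Set.range (fun x => σ (τ.symm x)) = Set.range (id : Fin n → Fin n) := by
        rw [Set.range_id]
        exact Function.Surjective.range_eq (fun x => ⟨τ (σ.symm x), by simp⟩)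
      have hid : (fun x => σ (τ.symm x)) = id :=
        (@StrictMono.range_inj (Fin n) (Fin n) _ _ w _ id hm strictMono_id).1 hrange
      apply Equiv.ext
      intro i
      have := congrFun hid (τ i)
      simpa using this
    · rintro ⟨r, hr⟩
      haveI := hr
      have htr : ∀ {i j k : Fin n}, r i j → r j k → r i k :=
        fun h1 h2 => _root_.trans_of r h1 h2
      have hirr : ∀ i, ¬ r i i := fun i => irrefl_of r i
      set e : Fin n → Fin n := fun i => ⟨{c | r c i}.ncard, rank_lt_n hirr i⟩ with he
      have hlt : ∀ i j, r i j → e i < e j := fun i j h => by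
        simpa [he, Fin.lt_def] using rank_lt (r := r) htr hirr h
      have hiff : ∀ i j, e i < e j ↔ r i j := by
        intro i j
        constructor
        · intro h
          rcases trichotomous_of r i j with h' | rfl | h'
          · exact h'
          · exact absurd h (lt_irrefl _)
          · exact absurd (lt_trans h (hlt _ _ h')) (lt_irrefl _)
        · exact hlt i j
      have hinj : Function.Injective e := by
        intro i j hij
        rcases trichotomous_of r i j with h' | rfl | h'
        · exact absurd (hlt _ _ h') (by rw [hij]; exact lt_irrefl _)
        · rfl
        · exact absurd (hlt _ _ h') (by rw [hij]; exact lt_irrefl _)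
      refine ⟨Equiv.ofBijective e (Finite.injective_iff_bijective.mp hinj), ?_⟩
      apply Subtype.ext
      funext i j
      exact propext (hiff i j)
  rw [← Nat.card_eq_of_bijective _ hbij, Nat.card_eq_fintype_card,
    Fintype.card_perm, Fintype.card_fin]

lemma facet_card :
    Nat.card {T : Set (B n) //
      IsNilpSub T ∧ ∀ U : Set (B n), IsNilpSub U → T ⊆ U → U = T} = n.factorial := by
  have hbij : Function.Bijective
      (fun p : {r : Fin n → Fin n → Prop // IsStrictTotalOrder (Fin n) r} =>
        (⟨gr p.1, (main_iff _).mpr ⟨p.1, p.2, rfl⟩⟩ :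
          {T : Set (B n) //
            IsNilpSub T ∧ ∀ U : Set (B n), IsNilpSub U → T ⊆ U → U = T})) := by
    constructor
    · rintro ⟨r, hr⟩ ⟨r', hr'⟩ h
      have h' : gr r = gr (n := n) r' := congrArg Subtype.val h
      apply Subtype.ext
      funext i j
      apply propext
      show r i j ↔ r' i j
      rw [← mem_gr r i j, h', mem_gr]
    · rintro ⟨T, hT⟩
      obtain ⟨r, hr, hTe⟩ := (main_iff T).mp hT
      exact ⟨⟨r, hr⟩, Subtype.ext hTe.symm⟩
  rw [← Nat.card_eq_of_bijective _ hbij, sto_card]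

end S6

/-- The maximal nilpotent subsemigroups of `B(n)` are exactly those of the form
`{(i,j) : i <_L j} ∪ {0}` for a strict linear order `L` on `{1,…,n}`; in
particular there are exactly `n!` of them. -/
theorem stmt6 (n : ℕ) :
    (∀ T : Set (B n),
      (IsNilpSub T ∧ ∀ U : Set (B n), IsNilpSub U → T ⊆ U → U = T) ↔
        (∃ r : Fin n → Fin n → Prop, IsStrictTotalOrder (Fin n) r ∧
          T = {none} ∪ {x | ∃ i j : Fin n, r i j ∧ x = some (i, j)})) ∧
    Nat.card {T : Set (B n) //
      IsNilpSub T ∧ ∀ U : Set (B n), IsNilpSub U → T ⊆ U → U = T} = Nat.factorial n := by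
  exact ⟨fun T => S6.main_iff T, S6.facet_card⟩
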